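/- arXiv:1912.08451 — 2 statements merged into one kernel-verified Lean document; each statement's English description precedes it below -/
import Mathlib

section
/- Let G be a finite group, H a normal subgroup of index 2, and ω ∈ G ∖ H. Let (π, V) be an irreducible complex representation of H such that the conjugate representation π^ω (given by π^ω(h) = π(ω h ω⁻¹)) is isomorphic to π. Then π extends to a representation of G on V, there are exactly two such extensions π₊ and π₋, and they are related by π₋(g) = χ(g) π₊(g) where χ is the unique nontrivial character of G/H (inflated to G); in particular π₋(ω) = −π₊(ω). -/
open scoped Classical

variable {G : Type*} [Group G] {V : Type*} [AddCommGroup V] [Module ℂ V]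

/-- The conjugate representation `π^ω` of a representation `π` of a normal subgroup `H`,
given by `π^ω(h) = π(ω h ω⁻¹)`. -/
def conjRep {H : Subgroup G} (hN : H.Normal) (ω : G) (π : Representation ℂ H V) :
    Representation ℂ H V :=
  haveI := hN
  π.comp (MulAut.conjNormal ω).toMonoidHom

/-- Isomorphism of representations. -/
def RepIso {H : Type*} [Group H] {V₁ V₂ : Type*} [AddCommGroup V₁] [Module ℂ V₁]
    [AddCommGroup V₂] [Module ℂ V₂]
    (π₁ : Representation ℂ H V₁) (π₂ : Representation ℂ H V₂) : Prop :=
  ∃ e : V₁ ≃ₗ[ℂ] V₂, ∀ (h : H) (v : V₁), e (π₁ h v) = π₂ h (e v)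

/-- Irreducibility of a representation: the space is nonzero and has no proper nonzero
invariant subspace. -/
def IsIrred {H : Type*} [Group H] {W : Type*} [AddCommGroup W] [Module ℂ W]
    (π : Representation ℂ H W) : Prop :=
  Nontrivial W ∧
    ∀ U : Submodule ℂ W, (∀ (h : H) (v : W), v ∈ U → π h v ∈ U) → U = ⊥ ∨ U = ⊤

/-- Schur's lemma for our notion of irreducibility. -/
lemma my_schur {H : Type*} [Group H] [FiniteDimensional ℂ V]
    (π : Representation ℂ H V) (hirr : IsIrred π) (T : V →ₗ[ℂ] V)
    (hT : ∀ h, T ∘ₗ π h = π h ∘ₗ T) :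
    ∃ c : ℂ, T = c • LinearMap.id := by
  haveI := hirr.1
  obtain ⟨c, hc⟩ := Module.End.exists_eigenvalue T
  obtain ⟨v, hv⟩ := hc.exists_hasEigenvector
  refine ⟨c, ?_⟩
  have hU := hirr.2 (LinearMap.ker (T - c • LinearMap.id)) ?_
  · rcases hU with hU | hU
    · exfalso
      have hm : v ∈ LinearMap.ker (T - c • LinearMap.id) := by
        simp [LinearMap.mem_ker, hv.apply_eq_smul, sub_eq_zero]
      rw [hU] at hm
      exact hv.2 (by simpa using hm)
    · ext x
      have hm : x ∈ LinearMap.ker (T - c • LinearMap.id) := hU ▸ Submodule.mem_top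
      simpa [LinearMap.mem_ker, sub_eq_zero] using hm
  · intro h w hw
    have h2 := congrArg (fun f => f w) (hT h)
    simp only [LinearMap.comp_apply] at h2
    simp only [LinearMap.mem_ker, LinearMap.sub_apply, LinearMap.smul_apply,
      LinearMap.id_apply] at hw ⊢
    rw [h2, ← map_smul, ← map_sub, hw, map_zero]

noncomputable def extFun {H : Subgroup G} (ω : G) (π : Representation ℂ H V) (A : V →ₗ[ℂ] V)
    (hmem : ∀ g : G, g ∉ H → ω⁻¹ * g ∈ H) : G → (V →ₗ[ℂ] V) := fun g =>
  if hg : g ∈ H then π ⟨g, hg⟩ else A ∘ₗ π ⟨ω⁻¹ * g, hmem g hg⟩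

lemma myPiCongr {H : Subgroup G} (π : Representation ℂ H V) {a b : G} (ha : a ∈ H)
    (hb : b ∈ H) (h : a = b) : π ⟨a, ha⟩ = π ⟨b, hb⟩ := by subst h; rfl

lemma myPiMul {H : Subgroup G} (π : Representation ℂ H V) (a b : G) (ha : a ∈ H) (hb : b ∈ H)
    (hab : a * b ∈ H) : π ⟨a * b, hab⟩ = π ⟨a, ha⟩ ∘ₗ π ⟨b, hb⟩ := by
  rw [show (⟨a * b, hab⟩ : H) = ⟨a, ha⟩ * ⟨b, hb⟩ from rfl, map_mul]; rfl

lemma extFun_mul {H : Subgroup G} (hN : H.Normal) (hidx : H.index = 2)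
    (ω : G) (hω : ω ∉ H) (π : Representation ℂ H V) (A : V →ₗ[ℂ] V)
    (hmem : ∀ g : G, g ∉ H → ω⁻¹ * g ∈ H)
    (hA1 : ∀ (h : G) (hh : h ∈ H) (hh' : ω * h * ω⁻¹ ∈ H),
      A ∘ₗ π ⟨h, hh⟩ = π ⟨ω * h * ω⁻¹, hh'⟩ ∘ₗ A)
    (hA2 : ∀ (hh : ω * ω ∈ H), A ∘ₗ A = π ⟨ω * ω, hh⟩) (g₁ g₂ : G) :
    extFun ω π A hmem (g₁ * g₂) = extFun ω π A hmem g₁ ∘ₗ extFun ω π A hmem g₂ := by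
  have key : ∀ {a b : G}, a * b ∈ H ↔ (a ∈ H ↔ b ∈ H) := fun {a b} =>
    Subgroup.mul_mem_iff_of_index_two hidx
  by_cases h1 : g₁ ∈ H <;> by_cases h2 : g₂ ∈ H
  · have h12 : g₁ * g₂ ∈ H := key.2 (by simp [h1, h2])
    simp only [extFun, dif_pos h1, dif_pos h2, dif_pos h12]
    exact myPiMul π g₁ g₂ h1 h2 h12
  · have h12 : g₁ * g₂ ∉ H := fun hx => h2 (by simpa [h1] using key.1 hx)
    simp only [extFun, dif_pos h1, dif_neg h2, dif_neg h12]
    have hc : ω⁻¹ * g₁ * ω ∈ H := by simpa using hN.conj_mem g₁ h1 ω⁻¹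
    have hc' : ω * (ω⁻¹ * g₁ * ω) * ω⁻¹ ∈ H := by
      rw [show ω * (ω⁻¹ * g₁ * ω) * ω⁻¹ = g₁ by group]; exact h1
    have e1 := hA1 (ω⁻¹ * g₁ * ω) hc hc'
    rw [myPiCongr π hc' h1 (by group)] at e1
    calc A ∘ₗ π ⟨ω⁻¹ * (g₁ * g₂), hmem _ h12⟩
        = A ∘ₗ (π ⟨ω⁻¹ * g₁ * ω, hc⟩ ∘ₗ π ⟨ω⁻¹ * g₂, hmem _ h2⟩) := by
          rw [← myPiMul π _ _ hc (hmem _ h2) (mul_mem hc (hmem _ h2)),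
            myPiCongr π (hmem _ h12) (mul_mem hc (hmem _ h2)) (by group)]
      _ = (A ∘ₗ π ⟨ω⁻¹ * g₁ * ω, hc⟩) ∘ₗ π ⟨ω⁻¹ * g₂, hmem _ h2⟩ := by
          rw [LinearMap.comp_assoc]
      _ = π ⟨g₁, h1⟩ ∘ₗ (A ∘ₗ π ⟨ω⁻¹ * g₂, hmem _ h2⟩) := by
          rw [e1, LinearMap.comp_assoc]
  · have h12 : g₁ * g₂ ∉ H := fun hx => h1 (by simpa [h2] using key.1 hx)
    simp only [extFun, dif_neg h1, dif_pos h2, dif_neg h12]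
    rw [LinearMap.comp_assoc, ← myPiMul π _ _ (hmem _ h1) h2 (mul_mem (hmem _ h1) h2),
      myPiCongr π (hmem _ h12) (mul_mem (hmem _ h1) h2) (by group)]
  · have h12 : g₁ * g₂ ∈ H := key.2 (by simp [h1, h2])
    simp only [extFun, dif_neg h1, dif_neg h2, dif_pos h12]
    have hc : ω⁻¹ * (ω⁻¹ * g₁) * ω ∈ H := by simpa using hN.conj_mem _ (hmem _ h1) ω⁻¹
    have hc' : ω * (ω⁻¹ * (ω⁻¹ * g₁) * ω) * ω⁻¹ ∈ H := by
      rw [show ω * (ω⁻¹ * (ω⁻¹ * g₁) * ω) * ω⁻¹ = ω⁻¹ * g₁ by group]; exact hmem _ h1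
    have e1 := hA1 (ω⁻¹ * (ω⁻¹ * g₁) * ω) hc hc'
    rw [myPiCongr π hc' (hmem _ h1) (by group)] at e1
    have hωω : ω * ω ∈ H := key.2 (by simp [hω])
    symm
    calc (A ∘ₗ π ⟨ω⁻¹ * g₁, hmem _ h1⟩) ∘ₗ (A ∘ₗ π ⟨ω⁻¹ * g₂, hmem _ h2⟩)
        = A ∘ₗ ((π ⟨ω⁻¹ * g₁, hmem _ h1⟩ ∘ₗ A) ∘ₗ π ⟨ω⁻¹ * g₂, hmem _ h2⟩) := by
          simp [LinearMap.comp_assoc]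
      _ = A ∘ₗ ((A ∘ₗ π ⟨ω⁻¹ * (ω⁻¹ * g₁) * ω, hc⟩) ∘ₗ π ⟨ω⁻¹ * g₂, hmem _ h2⟩) := by
          rw [e1]
      _ = (A ∘ₗ A) ∘ₗ (π ⟨ω⁻¹ * (ω⁻¹ * g₁) * ω, hc⟩ ∘ₗ π ⟨ω⁻¹ * g₂, hmem _ h2⟩) := by
          simp [LinearMap.comp_assoc]
      _ = π ⟨ω * ω, hωω⟩ ∘ₗ π ⟨(ω⁻¹ * (ω⁻¹ * g₁) * ω) * (ω⁻¹ * g₂), mul_mem hc (hmem _ h2)⟩ := by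
          rw [hA2 hωω, myPiMul π _ _ hc (hmem _ h2)]
      _ = π ⟨g₁ * g₂, h12⟩ := by
          rw [← myPiMul π _ _ hωω (mul_mem hc (hmem _ h2))
            (mul_mem hωω (mul_mem hc (hmem _ h2))),
            myPiCongr π (mul_mem hωω (mul_mem hc (hmem _ h2))) h12 (by group)]

/-- The extension of `π` to `G` determined by a suitable operator `A` playing the role of
`π(ω)`. -/
noncomputable def extRep {H : Subgroup G} (hN : H.Normal) (hidx : H.index = 2)
    (ω : G) (hω : ω ∉ H) (π : Representation ℂ H V) (A : V →ₗ[ℂ] V)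
    (hmem : ∀ g : G, g ∉ H → ω⁻¹ * g ∈ H)
    (hA1 : ∀ (h : G) (hh : h ∈ H) (hh' : ω * h * ω⁻¹ ∈ H),
      A ∘ₗ π ⟨h, hh⟩ = π ⟨ω * h * ω⁻¹, hh'⟩ ∘ₗ A)
    (hA2 : ∀ (hh : ω * ω ∈ H), A ∘ₗ A = π ⟨ω * ω, hh⟩) : Representation ℂ G V where
  toFun := extFun ω π A hmem
  map_one' := by
    simp only [extFun, dif_pos (one_mem H)]
    exact map_one π
  map_mul' g₁ g₂ := extFun_mul hN hidx ω hω π A hmem hA1 hA2 g₁ g₂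

lemma extRep_apply {H : Subgroup G} (hN : H.Normal) (hidx : H.index = 2)
    (ω : G) (hω : ω ∉ H) (π : Representation ℂ H V) (A : V →ₗ[ℂ] V)
    (hmem : ∀ g : G, g ∉ H → ω⁻¹ * g ∈ H) (hA1) (hA2) (g : G) :
    extRep hN hidx ω hω π A hmem hA1 hA2 g =
      if hg : g ∈ H then π ⟨g, hg⟩ else A ∘ₗ π ⟨ω⁻¹ * g, hmem g hg⟩ := rfl

/-- Let `G` be a finite group, `H` a normal subgroup of index 2, `ω ∈ G ∖ H`,
and `π` an irreducible complex representation of `H` with `π^ω ≅ π`. Then `π` extends to `G`,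
there are exactly two extensions `π₊, π₋`, and they are related by the unique nontrivial
character of `G/H`: `π₋(g) = χ(g) π₊(g)`; in particular `π₋(ω) = −π₊(ω)`. -/
theorem extension_of_selfconjugate_irreducible
    [Finite G] {H : Subgroup G} (hN : H.Normal) (hidx : H.index = 2)
    (ω : G) (hω : ω ∉ H) [FiniteDimensional ℂ V]
    (π : Representation ℂ H V) (hirr : IsIrred π)
    (hconj : RepIso (conjRep hN ω π) π) :
    ∃ πp πm : Representation ℂ G V,
      (∀ h : H, πp (h : G) = π h) ∧ (∀ h : H, πm (h : G) = π h) ∧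
      πp ≠ πm ∧
      (∀ ρ : Representation ℂ G V, (∀ h : H, ρ (h : G) = π h) → ρ = πp ∨ ρ = πm) ∧
      (∀ g : G, πm g = (if g ∈ H then (1 : ℂ) else -1) • πp g) ∧
      πm ω = -πp ω := by
  classical
  haveI : Nontrivial V := hirr.1
  obtain ⟨e, he⟩ := hconj
  have key : ∀ {a b : G}, a * b ∈ H ↔ (a ∈ H ↔ b ∈ H) := fun {a b} =>
    Subgroup.mul_mem_iff_of_index_two hidx
  have hmem : ∀ g : G, g ∉ H → ω⁻¹ * g ∈ H := fun g hg =>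
    key.2 (by simp [inv_mem_iff (H := H), hω, hg])
  have hωω : ω * ω ∈ H := key.2 (by simp [hω])
  -- the inverse of each π h pointwise
  have hpinv : ∀ (h : H) (z : V), π h⁻¹ (π h z) = z := fun h z => by
    rw [← Module.End.mul_apply, ← map_mul, inv_mul_cancel, map_one, Module.End.one_apply]
  have hpne : ∀ (h : H), π h ≠ 0 := by
    intro h h0
    obtain ⟨v, hv⟩ := exists_ne (0 : V)
    apply hv
    have := hpinv h v
    rw [h0] at this
    simpa using this.symm
  -- the intertwining relation for e
  have he' : ∀ (x : G) (hx : x ∈ H) (hx' : ω * x * ω⁻¹ ∈ H) (v : V),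
      e (π ⟨ω * x * ω⁻¹, hx'⟩ v) = π ⟨x, hx⟩ (e v) := by
    intro x hx hx' v
    have h1 := he ⟨x, hx⟩ v
    have hcr : (conjRep hN ω π) (⟨x, hx⟩ : H) = π ((MulAut.conjNormal ω) ⟨x, hx⟩) := rfl
    rw [hcr, show (MulAut.conjNormal ω) (⟨x, hx⟩ : H) = ⟨ω * x * ω⁻¹, hx'⟩ from
      Subtype.ext (MulAut.conjNormal_apply ω ⟨x, hx⟩)] at h1
    exact h1
  have hsymm : ∀ (x : G) (hx : x ∈ H) (hx' : ω * x * ω⁻¹ ∈ H) (v : V),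
      e.symm (π ⟨x, hx⟩ v) = π ⟨ω * x * ω⁻¹, hx'⟩ (e.symm v) := by
    intro x hx hx' v
    have := he' x hx hx' (e.symm v)
    rw [e.apply_symm_apply] at this
    rw [← this, e.symm_apply_apply]
  set E : V →ₗ[ℂ] V := e.symm.toLinearMap with hEdef
  have hE : ∀ (x : G) (hx : x ∈ H) (hx' : ω * x * ω⁻¹ ∈ H),
      E ∘ₗ π ⟨x, hx⟩ = π ⟨ω * x * ω⁻¹, hx'⟩ ∘ₗ E :=
    fun x hx hx' => LinearMap.ext fun v => hsymm x hx hx' v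
  -- Schur element
  set Q : V →ₗ[ℂ] V := π ⟨(ω * ω)⁻¹, inv_mem hωω⟩ with hQdef
  set T : V →ₗ[ℂ] V := Q ∘ₗ (E ∘ₗ E) with hTdef
  have hQE : π ⟨ω * ω, hωω⟩ ∘ₗ Q = LinearMap.id := by
    rw [hQdef, ← myPiMul π _ _ hωω (inv_mem hωω) (mul_mem hωω (inv_mem hωω)),
      myPiCongr π (mul_mem hωω (inv_mem hωω)) (one_mem H) (by group)]
    exact map_one π
  have hT : ∀ h : H, T ∘ₗ π h = π h ∘ₗ T := by
    rintro ⟨x, hx⟩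
    have m1 : ω * x * ω⁻¹ ∈ H := hN.conj_mem x hx ω
    have m2 : ω * (ω * x * ω⁻¹) * ω⁻¹ ∈ H := hN.conj_mem _ m1 ω
    have step1 : (E ∘ₗ E) ∘ₗ π ⟨x, hx⟩ = π ⟨ω * (ω * x * ω⁻¹) * ω⁻¹, m2⟩ ∘ₗ (E ∘ₗ E) := by
      calc (E ∘ₗ E) ∘ₗ π ⟨x, hx⟩ = E ∘ₗ (E ∘ₗ π ⟨x, hx⟩) := by rw [LinearMap.comp_assoc]
        _ = E ∘ₗ (π ⟨ω * x * ω⁻¹, m1⟩ ∘ₗ E) := by rw [hE x hx m1]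
        _ = (E ∘ₗ π ⟨ω * x * ω⁻¹, m1⟩) ∘ₗ E := by rw [LinearMap.comp_assoc]
        _ = (π ⟨ω * (ω * x * ω⁻¹) * ω⁻¹, m2⟩ ∘ₗ E) ∘ₗ E := by rw [hE _ m1 m2]
        _ = π ⟨ω * (ω * x * ω⁻¹) * ω⁻¹, m2⟩ ∘ₗ (E ∘ₗ E) := by rw [LinearMap.comp_assoc]
    have step2 : Q ∘ₗ π ⟨ω * (ω * x * ω⁻¹) * ω⁻¹, m2⟩ = π ⟨x, hx⟩ ∘ₗ Q := by
      rw [hQdef, ← myPiMul π _ _ (inv_mem hωω) m2 (mul_mem (inv_mem hωω) m2),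
        ← myPiMul π _ _ hx (inv_mem hωω) (mul_mem hx (inv_mem hωω)),
        myPiCongr π (mul_mem (inv_mem hωω) m2) (mul_mem hx (inv_mem hωω)) (by group)]
    calc T ∘ₗ π ⟨x, hx⟩ = Q ∘ₗ ((E ∘ₗ E) ∘ₗ π ⟨x, hx⟩) := by
          rw [hTdef, LinearMap.comp_assoc]
      _ = (Q ∘ₗ π ⟨ω * (ω * x * ω⁻¹) * ω⁻¹, m2⟩) ∘ₗ (E ∘ₗ E) := by
          rw [step1, LinearMap.comp_assoc]
      _ = π ⟨x, hx⟩ ∘ₗ T := by rw [step2, hTdef, LinearMap.comp_assoc]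
  obtain ⟨c, hc⟩ := my_schur π hirr T hT
  -- c ≠ 0
  have hc0 : c ≠ 0 := by
    intro h0
    obtain ⟨v, hv⟩ := exists_ne (0 : V)
    have hTv : T v = 0 := by rw [hc, h0]; simp
    have hEEv : E (E v) ≠ 0 := by
      simp only [hEdef, LinearEquiv.coe_coe]
      rw [LinearEquiv.map_ne_zero_iff, LinearEquiv.map_ne_zero_iff]
      exact hv
    apply hEEv
    have := hpinv ⟨(ω * ω)⁻¹, inv_mem hωω⟩ (E (E v))
    rw [show Q (E (E v)) = T v from rfl] at this
    rw [hTv, map_zero] at this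
    exact this.symm
  obtain ⟨μ, hμ⟩ := IsAlgClosed.exists_pow_nat_eq (k := ℂ) c⁻¹ (n := 2) (by norm_num)
  have hμ0 : μ ≠ 0 := by
    intro h0
    rw [h0, zero_pow two_ne_zero] at hμ
    exact hc0 (inv_eq_zero.mp hμ.symm)
  set A : V →ₗ[ℂ] V := μ • E with hAdef
  have hA1 : ∀ (x : G) (hx : x ∈ H) (hx' : ω * x * ω⁻¹ ∈ H),
      A ∘ₗ π ⟨x, hx⟩ = π ⟨ω * x * ω⁻¹, hx'⟩ ∘ₗ A := by
    intro x hx hx'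
    rw [hAdef, LinearMap.smul_comp, LinearMap.comp_smul, hE x hx hx']
  have hEE : E ∘ₗ E = c • π ⟨ω * ω, hωω⟩ := by
    have h1 : π ⟨ω * ω, hωω⟩ ∘ₗ T = E ∘ₗ E := by
      rw [hTdef, ← LinearMap.comp_assoc, hQE, LinearMap.id_comp]
    rw [← h1, hc]
    rw [LinearMap.comp_smul, LinearMap.comp_id]
  have hA2 : ∀ (hh : ω * ω ∈ H), A ∘ₗ A = π ⟨ω * ω, hh⟩ := by
    intro hh
    rw [hAdef, LinearMap.smul_comp, LinearMap.comp_smul, hEE, smul_smul, smul_smul,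
      show μ * μ * c = μ ^ 2 * c by ring, hμ, inv_mul_cancel₀ hc0, one_smul]
  have hA1m : ∀ (x : G) (hx : x ∈ H) (hx' : ω * x * ω⁻¹ ∈ H),
      (-A) ∘ₗ π ⟨x, hx⟩ = π ⟨ω * x * ω⁻¹, hx'⟩ ∘ₗ (-A) := by
    intro x hx hx'
    rw [LinearMap.neg_comp, LinearMap.comp_neg, hA1 x hx hx']
  have hA2m : ∀ (hh : ω * ω ∈ H), (-A) ∘ₗ (-A) = π ⟨ω * ω, hh⟩ := by
    intro hh
    rw [LinearMap.neg_comp, LinearMap.comp_neg, neg_neg, hA2 hh]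
  set πp := extRep hN hidx ω hω π A hmem hA1 hA2 with hπp
  set πm := extRep hN hidx ω hω π (-A) hmem hA1m hA2m with hπm
  have hrestr : ∀ (ρA : V →ₗ[ℂ] V) hA1' hA2' (h : H),
      extRep hN hidx ω hω π ρA hmem hA1' hA2' (h : G) = π h := by
    intro ρA hA1' hA2' h
    rw [extRep_apply, dif_pos h.2]
  -- value at ω
  have hπ1 : π ⟨ω⁻¹ * ω, hmem ω hω⟩ = LinearMap.id := by
    rw [myPiCongr π (hmem ω hω) (one_mem H) (by group)]
    exact map_one π
  have hpω : πp ω = A := by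
    rw [hπp, extRep_apply, dif_neg hω, hπ1, LinearMap.comp_id]
  have hmω : πm ω = -A := by
    rw [hπm, extRep_apply, dif_neg hω, hπ1, LinearMap.comp_id]
  -- A ≠ -A
  have hAne : A ≠ -A := by
    intro hEq
    obtain ⟨v, hv⟩ := exists_ne (0 : V)
    have hAv : A v ≠ 0 := by
      rw [hAdef]
      simp only [LinearMap.smul_apply, hEdef, LinearEquiv.coe_coe]
      rw [smul_ne_zero_iff]
      exact ⟨hμ0, by rwa [LinearEquiv.map_ne_zero_iff]⟩
    have h2 : A v + A v = 0 := by
      nth_rewrite 1 [hEq]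
      simp
    have : (2 : ℂ) • A v = 0 := by
      rw [two_smul]
      exact h2
    rcases smul_eq_zero.mp this with h | h
    · norm_num at h
    · exact hAv h
  refine ⟨πp, πm, hrestr A hA1 hA2, hrestr (-A) hA1m hA2m, ?_, ?_, ?_, ?_⟩
  · intro hEq
    apply hAne
    rw [← hmω, ← hpω, hEq]
  · -- uniqueness
    intro ρ hρ
    have hρ' : ∀ (x : G) (hx : x ∈ H), ρ x = π ⟨x, hx⟩ := fun x hx => hρ ⟨x, hx⟩
    have hrmul : ∀ a b : G, ρ (a * b) = ρ a ∘ₗ ρ b := fun a b => by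
      rw [map_mul]; rfl
    set S := ρ ω with hSdef
    set Sinv := ρ ω⁻¹ with hSinvdef
    have hSS : Sinv ∘ₗ S = LinearMap.id := by
      rw [hSinvdef, hSdef, ← hrmul, inv_mul_cancel, map_one]; rfl
    have hS1' : ∀ (x : G) (hx : x ∈ H) (hx' : ω⁻¹ * x * ω ∈ H),
        Sinv ∘ₗ π ⟨x, hx⟩ = π ⟨ω⁻¹ * x * ω, hx'⟩ ∘ₗ Sinv := by
      intro x hx hx'
      rw [hSinvdef, ← hρ' x hx, ← hrmul]
      conv_lhs => rw [show ω⁻¹ * x = (ω⁻¹ * x * ω) * ω⁻¹ by group]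
      rw [hrmul, hρ' _ hx']
    set C : V →ₗ[ℂ] V := A ∘ₗ Sinv with hCdef
    have hC : ∀ h : H, C ∘ₗ π h = π h ∘ₗ C := by
      rintro ⟨x, hx⟩
      have m : ω⁻¹ * x * ω ∈ H := by simpa using hN.conj_mem x hx ω⁻¹
      have m' : ω * (ω⁻¹ * x * ω) * ω⁻¹ ∈ H := hN.conj_mem _ m ω
      calc C ∘ₗ π ⟨x, hx⟩ = A ∘ₗ (Sinv ∘ₗ π ⟨x, hx⟩) := by
            rw [hCdef, LinearMap.comp_assoc]
        _ = (A ∘ₗ π ⟨ω⁻¹ * x * ω, m⟩) ∘ₗ Sinv := by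
            rw [hS1' x hx m, LinearMap.comp_assoc]
        _ = (π ⟨ω * (ω⁻¹ * x * ω) * ω⁻¹, m'⟩ ∘ₗ A) ∘ₗ Sinv := by
            rw [hA1 _ m m']
        _ = π ⟨x, hx⟩ ∘ₗ C := by
            rw [myPiCongr π m' hx (by group), hCdef, LinearMap.comp_assoc]
    obtain ⟨t, ht⟩ := my_schur π hirr C hC
    have hAS : A = t • S := by
      calc A = A ∘ₗ (Sinv ∘ₗ S) := by rw [hSS, LinearMap.comp_id]
        _ = C ∘ₗ S := by rw [hCdef, LinearMap.comp_assoc]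
        _ = t • S := by rw [ht, LinearMap.smul_comp, LinearMap.id_comp]
    have hSS2 : S ∘ₗ S = π ⟨ω * ω, hωω⟩ := by
      rw [hSdef, ← hrmul, hρ' _ hωω]
    have ht2 : t * t = 1 := by
      have hAA : A ∘ₗ A = (t * t) • π ⟨ω * ω, hωω⟩ := by
        rw [hAS, LinearMap.smul_comp, LinearMap.comp_smul, smul_smul, hSS2]
      rw [hA2 hωω] at hAA
      have hsub : (t * t - 1) • π (⟨ω * ω, hωω⟩ : H) = 0 := by
        rw [sub_smul, one_smul]
        rw [← hAA]
        simp
      rcases smul_eq_zero.mp hsub with h | h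
      · linear_combination h
      · exact absurd h (hpne _)
    rcases mul_self_eq_one_iff.mp ht2 with ht1 | ht1
    · left
      rw [ht1, one_smul] at hAS
      apply DFunLike.ext
      intro g
      by_cases hg : g ∈ H
      · rw [hρ' g hg, hπp, extRep_apply, dif_pos hg]
      · rw [hπp, extRep_apply, dif_neg hg, ← hρ' _ (hmem g hg), hAS, hSdef, ← hrmul,
          show ω * (ω⁻¹ * g) = g by group]
    · right
      rw [ht1, neg_one_smul] at hAS
      have hSA : S = -A := by rw [hAS, neg_neg]
      apply DFunLike.ext
      intro g
      by_cases hg : g ∈ H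
      · rw [hρ' g hg, hπm, extRep_apply, dif_pos hg]
      · rw [hπm, extRep_apply, dif_neg hg, ← hρ' _ (hmem g hg), ← hSA, hSdef, ← hrmul,
          show ω * (ω⁻¹ * g) = g by group]
  · intro g
    by_cases hg : g ∈ H
    · rw [if_pos hg, one_smul, hπp, hπm, extRep_apply, extRep_apply, dif_pos hg, dif_pos hg]
    · rw [if_neg hg, hπp, hπm, extRep_apply, extRep_apply, dif_neg hg, dif_neg hg,
        LinearMap.neg_comp, neg_one_smul]
  · rw [hpω, hmω]
end

section
/- Let G be a finite group, H a normal subgroup of index 2, and ω ∈ G ∖ H. Let (π, V) be an irreducible complex representation of H such that the conjugate representation π^ω is not isomorphic to π. Then the induced representation Ind_H^G(π) is irreducible, and its restriction to H is isomorphic to π ⊕ π^ω. -/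
variable {G : Type*} [Group G] {V : Type*} [AddCommGroup V] [Module ℂ V]

/-- The carrier of the induced representation `Ind_H^G π`: functions `f : G → V` with
`f(hg) = π(h) f(g)`. -/
def IndSpace (H : Subgroup G) (π : Representation ℂ H V) : Submodule ℂ (G → V) where
  carrier := {f | ∀ (h : H) (g : G), f ((h : G) * g) = π h (f g)}
  add_mem' := by
    intro a b ha hb h g
    simp only [Pi.add_apply, ha h g, hb h g, map_add]
  zero_mem' := by intro h g; simp
  smul_mem' := by
    intro c f hf h g
    simp only [Pi.smul_apply, hf h g, map_smul]

/-- The induced representation `Ind_H^G π`, with `G` acting by right translation. -/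
def indRep (H : Subgroup G) (π : Representation ℂ H V) :
    Representation ℂ G (IndSpace H π) where
  toFun g :=
    { toFun := fun f => ⟨fun x => (f : G → V) (x * g), by
        intro h x
        simpa [mul_assoc] using f.2 h (x * g)⟩
      map_add' := by intro a b; ext x; simp
      map_smul' := by intro c a; ext x; simp }
  map_one' := by
    apply LinearMap.ext; intro f; apply Subtype.ext; funext x; simp
  map_mul' := by
    intro a b
    apply LinearMap.ext; intro f; apply Subtype.ext; funext x
    simp [mul_assoc]

/-- The direct sum `π₁ ⊕ π₂` of two representations, on `V₁ × V₂`. -/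
def prodRep {H : Type*} [Group H] {V₁ V₂ : Type*} [AddCommGroup V₁] [Module ℂ V₁]
    [AddCommGroup V₂] [Module ℂ V₂]
    (π₁ : Representation ℂ H V₁) (π₂ : Representation ℂ H V₂) :
    Representation ℂ H (V₁ × V₂) where
  toFun h := (π₁ h).prodMap (π₂ h)
  map_one' := by simp [LinearMap.prodMap_one]
  map_mul' := by intro a b; simp [LinearMap.prodMap_mul]

open Classical in
/-- The evaluation equivalence `Ind_H^G π ≃ V × V`, `f ↦ (f 1, f ω)`. -/
noncomputable def indEquiv (H : Subgroup G) (hidx : H.index = 2) (ω : G) (hω : ω ∉ H)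
    (π : Representation ℂ H V) : IndSpace H π ≃ₗ[ℂ] V × V where
  toFun f := ((f : G → V) 1, (f : G → V) ω)
  map_add' a b := rfl
  map_smul' c a := rfl
  invFun p := ⟨fun g => if hg : g ∈ H then π ⟨g, hg⟩ p.1
      else π ⟨g * ω⁻¹, by
        rw [Subgroup.mul_mem_iff_of_index_two hidx]
        simp [hg, hω]⟩ p.2, by
    intro h g
    by_cases hg : g ∈ H
    · have h1 : (h : G) * g ∈ H := mul_mem h.2 hg
      simp only [dif_pos hg, dif_pos h1]
      rw [show (⟨(h:G) * g, h1⟩ : H) = h * ⟨g, hg⟩ from rfl, map_mul]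
      rfl
    · have h1 : (h : G) * g ∉ H := fun hh => hg (by
        have := mul_mem (inv_mem h.2) hh; rwa [← mul_assoc, inv_mul_cancel, one_mul] at this)
      have h2 : (h:G) * g * ω⁻¹ ∈ H := by
        rw [Subgroup.mul_mem_iff_of_index_two hidx]; simp [h1, hω]
      have h3 : g * ω⁻¹ ∈ H := by
        rw [Subgroup.mul_mem_iff_of_index_two hidx]; simp [hg, hω]
      simp only [dif_neg hg, dif_neg h1]
      rw [show (⟨(h:G) * g * ω⁻¹, h2⟩ : H) = h * ⟨g * ω⁻¹, h3⟩ from by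
        ext; simp [mul_assoc], map_mul]
      rfl⟩
  left_inv := by
    intro f
    apply Subtype.ext
    funext g
    by_cases hg : g ∈ H
    · simp only [dif_pos hg]
      have := f.2 ⟨g, hg⟩ 1
      rw [mul_one] at this
      exact this.symm
    · have h3 : g * ω⁻¹ ∈ H := by
        rw [Subgroup.mul_mem_iff_of_index_two hidx]; simp [hg, hω]
      simp only [dif_neg hg]
      have := f.2 ⟨g * ω⁻¹, h3⟩ ω
      simp only [inv_mul_cancel_right] at this
      exact this.symm
  right_inv := by
    intro p
    have h1 : (1 : G) ∈ H := one_mem H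
    ext
    · simp only [dif_pos h1]
      rw [show (⟨(1:G), h1⟩ : H) = 1 from rfl, map_one]; rfl
    · simp only [dif_neg hω]
      rw [show (⟨ω * ω⁻¹, _⟩ : H) = 1 from by ext; simp, map_one]; rfl

/-- Let `G` be a finite group, `H` a normal subgroup of index 2, `ω ∈ G ∖ H`,
and `π` an irreducible complex representation of `H` with `π^ω ≇ π`. Then `Ind_H^G π` is
irreducible, and its restriction to `H` is isomorphic to `π ⊕ π^ω`. -/
theorem induced_irreducible_of_not_selfconjugate
    [Finite G] {H : Subgroup G} (hN : H.Normal) (hidx : H.index = 2)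
    (ω : G) (hω : ω ∉ H) [FiniteDimensional ℂ V]
    (π : Representation ℂ H V) (hirr : IsIrred π)
    (hconj : ¬ RepIso (conjRep hN ω π) π) :
    IsIrred (indRep H π) ∧
      RepIso ((indRep H π).comp H.subtype) (prodRep π (conjRep hN ω π)) := by
  classical
  obtain ⟨hV, hIrr⟩ := hirr
  set E := indEquiv H hidx ω hω π with hE
  -- the intertwining property of E with respect to the H-actions
  have hππ : ∀ (h : H) (f : IndSpace H π),
      E ((indRep H π) (h : G) f) = (prodRep π (conjRep hN ω π)) h (E f) := by
    intro h f
    have e1 : (f : G → V) ((1:G) * (h:G)) = π h ((f : G → V) 1) := by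
      rw [one_mul]
      have := f.2 h 1
      rwa [mul_one] at this
    have e2 : (f : G → V) (ω * (h:G)) = π (MulAut.conjNormal ω h) ((f : G → V) ω) := by
      have := f.2 (MulAut.conjNormal ω h) ω
      rw [MulAut.conjNormal_apply, inv_mul_cancel_right] at this
      exact this
    exact Prod.ext e1 e2
  -- the action of ω on the model V × V
  have hω2 : ω * ω ∈ H := Subgroup.mul_self_mem_of_index_two hidx ω
  have hS : ∀ f : IndSpace H π,
      E ((indRep H π) ω f) = ((f : G → V) ω, π ⟨ω * ω, hω2⟩ ((f : G → V) 1)) := by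
    intro f
    have e1 : (f : G → V) ((1:G) * ω) = (f : G → V) ω := by rw [one_mul]
    have e2 : (f : G → V) (ω * ω) = π ⟨ω * ω, hω2⟩ ((f : G → V) 1) := by
      have := f.2 ⟨ω * ω, hω2⟩ 1
      rwa [mul_one] at this
    exact Prod.ext e1 e2
  -- each π h is injective
  have hπinj : ∀ a : H, Function.Injective (π a) := by
    intro a x y hxy
    have h0 : ∀ z, π a⁻¹ (π a z) = z := by
      intro z
      rw [← Module.End.mul_apply, ← map_mul, inv_mul_cancel, map_one, Module.End.one_apply]
    rw [← h0 x, ← h0 y, hxy]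
  constructor
  · -- irreducibility
    constructor
    · -- nontriviality
      exact E.toEquiv.nontrivial
    · intro U hU
      by_cases hUbot : U = ⊥
      · exact Or.inl hUbot
      right
      set W : Submodule ℂ (V × V) := U.map (E : IndSpace H π →ₗ[ℂ] V × V) with hW
      have hWne : W ≠ ⊥ := by
        obtain ⟨f, hfU, hf0⟩ := Submodule.ne_bot_iff U |>.mp hUbot
        rw [Submodule.ne_bot_iff]
        refine ⟨E f, ⟨f, hfU, rfl⟩, fun h0 => hf0 ?_⟩
        have := E.injective (h0.trans (map_zero (E : IndSpace H π →ₗ[ℂ] V × V)).symm)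
        exact this
      have hWH : ∀ (h : H), ∀ p ∈ W, (π h p.1, conjRep hN ω π h p.2) ∈ W := by
        rintro h p ⟨f, hf, rfl⟩
        exact ⟨(indRep H π) (h : G) f, hU (h : G) f hf, hππ h f⟩
      have hWS : ∀ p ∈ W, (p.2, π ⟨ω * ω, hω2⟩ p.1) ∈ W := by
        rintro p ⟨f, hf, rfl⟩
        exact ⟨(indRep H π) ω f, hU ω f hf, hS f⟩
      -- the projections and slices
      set W₁ : Submodule ℂ V := W.map (LinearMap.fst ℂ V V) with hW₁def
      set W₂ : Submodule ℂ V := W.map (LinearMap.snd ℂ V V) with hW₂def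
      set K₂ : Submodule ℂ V := W.comap (LinearMap.inr ℂ V V) with hK₂def
      have hW₁inv : ∀ (h : H) (v : V), v ∈ W₁ → π h v ∈ W₁ := by
        rintro h v ⟨p, hp, rfl⟩
        exact ⟨_, hWH h p hp, rfl⟩
      have hW₂inv : ∀ (h : H) (v : V), v ∈ W₂ → π h v ∈ W₂ := by
        rintro h v ⟨p, hp, rfl⟩
        have := hWH ((MulAut.conjNormal ω).symm h) p hp
        have hc : conjRep hN ω π ((MulAut.conjNormal ω).symm h) = π h := by
          show π ((MulAut.conjNormal ω) ((MulAut.conjNormal ω).symm h)) = π h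
          rw [MulEquiv.apply_symm_apply]
        rw [hc] at this
        exact ⟨_, this, rfl⟩
      have hK₂inv : ∀ (h : H) (v : V), v ∈ K₂ → π h v ∈ K₂ := by
        intro h v hv
        have hv' : ((0 : V), v) ∈ W := hv
        have := hWH ((MulAut.conjNormal ω).symm h) _ hv'
        have hc : conjRep hN ω π ((MulAut.conjNormal ω).symm h) = π h := by
          show π ((MulAut.conjNormal ω) ((MulAut.conjNormal ω).symm h)) = π h
          rw [MulEquiv.apply_symm_apply]
        rw [hc] at this
        simp only [map_zero] at this
        exact this
      -- reduce U = ⊤ to W = ⊤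
      suffices hWtop : W = ⊤ by
        rw [eq_top_iff]
        rintro f -
        have hEf : E f ∈ W := hWtop ▸ Submodule.mem_top
        obtain ⟨f', hf', hEff⟩ := hEf
        exact E.injective hEff ▸ hf'
      rcases hIrr W₁ hW₁inv with h₁ | h₁
      · -- W₁ = ⊥ : contradiction with W ≠ ⊥
        exfalso
        apply hWne
        rw [eq_bot_iff]
        rintro p hp
        have hp1 : p.1 = 0 := by
          have : p.1 ∈ W₁ := ⟨p, hp, rfl⟩
          rwa [h₁, Submodule.mem_bot] at this
        have hp2 : p.2 = 0 := by
          have : p.2 ∈ W₁ := ⟨_, hWS p hp, rfl⟩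
          rwa [h₁, Submodule.mem_bot] at this
        show p ∈ (⊥ : Submodule ℂ (V × V))
        rw [Submodule.mem_bot]
        exact Prod.ext hp1 hp2
      -- now W₁ = ⊤
      rcases hIrr K₂ hK₂inv with h₂ | h₂
      · -- K₂ = ⊥ : W is the graph of an intertwiner, contradiction with hconj
        exfalso
        have key : ∀ p ∈ W, ∀ q ∈ W, p.1 = q.1 → p.2 = q.2 := by
          intro p hp q hq hpq
          have hsub : p - q ∈ W := W.sub_mem hp hq
          have h0 : p - q = ((0 : V), p.2 - q.2) := by
            ext
            · simp [hpq]
            · rfl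
          rw [h0] at hsub
          have : p.2 - q.2 ∈ K₂ := hsub
          rw [h₂, Submodule.mem_bot, sub_eq_zero] at this
          exact this
        set φ : W →ₗ[ℂ] V := (LinearMap.fst ℂ V V).comp W.subtype with hφ
        have φinj : Function.Injective φ := by
          intro x y hxy
          exact Subtype.ext (Prod.ext hxy (key _ x.2 _ y.2 hxy))
        have φsurj : Function.Surjective φ := by
          intro v
          have : v ∈ W₁ := h₁ ▸ Submodule.mem_top
          obtain ⟨p, hp, hp1⟩ := this
          exact ⟨⟨p, hp⟩, hp1⟩
        set ψ := LinearEquiv.ofBijective φ ⟨φinj, φsurj⟩ with hψ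
        set T : V →ₗ[ℂ] V :=
          (LinearMap.snd ℂ V V).comp (W.subtype.comp (ψ.symm : V →ₗ[ℂ] W)) with hT
        have hTmem : ∀ v : V, (v, T v) ∈ W := by
          intro v
          have hx : ((ψ.symm v : W) : V × V) ∈ W := (ψ.symm v).2
          have h1 : ((ψ.symm v : W) : V × V).1 = v := ψ.apply_symm_apply v
          have h2 : ((ψ.symm v : W) : V × V).2 = T v := rfl
          have h3 : ((ψ.symm v : W) : V × V) = (v, T v) := Prod.ext h1 h2
          rw [← h3]
          exact hx
        have hTuniq : ∀ v w : V, (v, w) ∈ W → w = T v := fun v w hw =>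
          key (v, w) hw (v, T v) (hTmem v) rfl
        have hTint : ∀ (h : H) (v : V), T (π h v) = conjRep hN ω π h (T v) := by
          intro h v
          exact (hTuniq _ _ (hWH h (v, T v) (hTmem v))).symm
        -- surjectivity of T
        have hW₂top : W₂ = ⊤ := by
          rcases hIrr W₂ hW₂inv with h₃ | h₃
          · exfalso
            apply hWne
            rw [eq_bot_iff]
            rintro p hp
            have hp2 : p.2 = 0 := by
              have : p.2 ∈ W₂ := ⟨p, hp, rfl⟩
              rwa [h₃, Submodule.mem_bot] at this
            have hp1 : p.1 = 0 := by
              have : π ⟨ω * ω, hω2⟩ p.1 ∈ W₂ := ⟨_, hWS p hp, rfl⟩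
              rw [h₃, Submodule.mem_bot] at this
              exact hπinj _ (this.trans (map_zero _).symm)
            show p ∈ (⊥ : Submodule ℂ (V × V))
            rw [Submodule.mem_bot]
            exact Prod.ext hp1 hp2
          · exact h₃
        have hTsurj : Function.Surjective T := by
          intro w
          have : w ∈ W₂ := hW₂top ▸ Submodule.mem_top
          obtain ⟨p, hp, rfl⟩ := this
          refine ⟨p.1, ?_⟩
          have : p = (p.1, p.2) := rfl
          exact (hTuniq p.1 p.2 (this ▸ hp)).symm
        have hTinj : Function.Injective T := by
          have hker : ∀ (h : H) (v : V), v ∈ LinearMap.ker T → π h v ∈ LinearMap.ker T := by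
            intro h v hv
            rw [LinearMap.mem_ker] at hv ⊢
            rw [hTint, hv, map_zero]
          rcases hIrr (LinearMap.ker T) hker with h₃ | h₃
          · exact LinearMap.ker_eq_bot.mp h₃
          · exfalso
            obtain ⟨a, b, hab⟩ := hV
            obtain ⟨x, rfl⟩ := hTsurj a
            obtain ⟨y, rfl⟩ := hTsurj b
            have hx : T x = 0 := by
              have : x ∈ LinearMap.ker T := h₃ ▸ Submodule.mem_top
              rwa [LinearMap.mem_ker] at this
            have hy : T y = 0 := by
              have : y ∈ LinearMap.ker T := h₃ ▸ Submodule.mem_top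
              rwa [LinearMap.mem_ker] at this
            exact hab (hx.trans hy.symm)
        set e := LinearEquiv.ofBijective T ⟨hTinj, hTsurj⟩ with he
        apply hconj
        refine ⟨e.symm, fun h v => ?_⟩
        rw [LinearEquiv.symm_apply_eq]
        rw [show e (π h (e.symm v)) = T (π h (e.symm v)) from rfl, hTint,
          show T (e.symm v) = e (e.symm v) from rfl, e.apply_symm_apply]
      · -- K₂ = ⊤ : W = ⊤
        rw [eq_top_iff]
        rintro p -
        have : p.1 ∈ W₁ := h₁ ▸ Submodule.mem_top
        obtain ⟨q, hq, hq1⟩ := this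
        have h0w : ((0 : V), p.2 - q.2) ∈ W := by
          have : p.2 - q.2 ∈ K₂ := h₂ ▸ Submodule.mem_top
          exact this
        have := W.add_mem hq h0w
        have heq : q + ((0 : V), p.2 - q.2) = p := by
          ext
          · simpa using hq1
          · simp
        rwa [heq] at this
  · -- restriction to H is π ⊕ π^ω
    exact ⟨E, fun h f => hππ h f⟩
end
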